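/- Let A be a noetherian local ring with p in its maximal ideal, and let a_1,…,a_d be a regular sequence for A contained in the maximal ideal. Then the Teichmüller lifts [a_1],…,[a_d] lie in the maximal ideal of W_n(A) and form a regular sequence for W_n(A). -/

import Mathlib

open RingTheory.Sequence Function
open scoped Pointwise

section ModuleLemmas

variable {R : Type} [CommRing R]

private lemma mem_smul_top_iff' {M : Type} [AddCommGroup M] [Module R M] (r : R) (x : M) :
    x ∈ r • (⊤ : Submodule R M) ↔ ∃ y, r • y = x := by
  rw [← SetLike.mem_coe, Submodule.coe_pointwise_smul, Set.mem_smul_set]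
  simp

private lemma isWeaklyRegular_of_subsingleton {M : Type} [AddCommGroup M] [Module R M]
    [Subsingleton M] (rs : List R) : IsWeaklyRegular M rs := by
  constructor
  intro i hi
  haveI : Subsingleton (M ⧸ (Ideal.ofList (rs.take i) • ⊤ : Submodule R M)) :=
    (Submodule.Quotient.mk_surjective _).subsingleton
  intro x y _
  exact Subsingleton.elim x y

private lemma isWeaklyRegular_of_exact :
    ∀ (rs : List R) {K M N : Type} [AddCommGroup K] [AddCommGroup M] [AddCommGroup N]
      [Module R K] [Module R M] [Module R N] (ι : K →ₗ[R] M) (f : M →ₗ[R] N),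
      Function.Injective ι → Function.Surjective f → Function.Exact ι f →
      IsWeaklyRegular K rs → IsWeaklyRegular N rs → IsWeaklyRegular M rs := by
  intro rs
  induction rs with
  | nil => intros; exact IsWeaklyRegular.nil ..
  | cons r rs ih =>
    intro K M N _ _ _ _ _ _ ι f hι hf hex hK hN
    rw [isWeaklyRegular_cons_iff] at hK hN ⊢
    obtain ⟨hK1, hK2⟩ := hK
    obtain ⟨hN1, hN2⟩ := hN
    have hreg : IsSMulRegular M r := by
      intro x y hxy
      have h0 : r • (x - y) = 0 := by
        rw [smul_sub, show r • x = r • y from hxy, sub_self]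
      have hfz : f (x - y) = 0 :=
        hN1 (show r • f (x - y) = r • 0 by rw [← map_smul, h0, map_zero, smul_zero])
      obtain ⟨k, hk⟩ := (hex (x - y)).mp hfz
      have h1 : ι (r • k) = 0 := by rw [map_smul, hk, h0]
      have h2 : r • k = 0 := hι (show ι (r • k) = ι 0 by rw [h1, map_zero])
      have h3 : k = 0 := hK1 (show r • k = r • 0 by rw [h2, smul_zero])
      have : x - y = 0 := by rw [← hk, h3, map_zero]
      exact sub_eq_zero.mp this
    refine ⟨hreg, ?_⟩
    refine ih (QuotSMulTop.map r ι) (QuotSMulTop.map r f) ?_ ?_ ?_ hK2 hN2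
    · rw [injective_iff_map_eq_zero]
      intro aq
      obtain ⟨x, rfl⟩ := Submodule.Quotient.mk_surjective _ aq
      intro hx
      rw [QuotSMulTop.map_apply_mk, Submodule.Quotient.mk_eq_zero] at hx
      obtain ⟨y, hy⟩ := (mem_smul_top_iff' r (ι x)).mp hx
      have hfy : f y = 0 := hN1 (show r • f y = r • 0 by
        rw [smul_zero, ← map_smul, hy, hex.apply_apply_eq_zero])
      obtain ⟨k, hk⟩ := (hex y).mp hfy
      have hx' : ι x = ι (r • k) := by rw [map_smul, hk, hy]
      rw [Submodule.Quotient.mk_eq_zero]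
      exact (mem_smul_top_iff' r x).mpr ⟨k, (hι hx').symm⟩
    · intro bq
      obtain ⟨z, rfl⟩ := Submodule.Quotient.mk_surjective _ bq
      obtain ⟨x, rfl⟩ := hf z
      exact ⟨Submodule.Quotient.mk x, rfl⟩
    · intro bq
      obtain ⟨x, rfl⟩ := Submodule.Quotient.mk_surjective _ bq
      rw [QuotSMulTop.map_apply_mk]
      constructor
      · intro hx
        rw [Submodule.Quotient.mk_eq_zero] at hx
        obtain ⟨w, hw⟩ := (mem_smul_top_iff' r (f x)).mp hx
        obtain ⟨u, hu⟩ := hf w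
        have : f (x - r • u) = 0 := by
          rw [map_sub, map_smul, hu, hw, sub_self]
        obtain ⟨k, hk⟩ := (hex (x - r • u)).mp this
        refine ⟨Submodule.Quotient.mk k, ?_⟩
        rw [QuotSMulTop.map_apply_mk, hk, Submodule.Quotient.mk_sub,
          show (Submodule.Quotient.mk (r • u) : QuotSMulTop r M) = 0 from
            (Submodule.Quotient.mk_eq_zero _).mpr ((mem_smul_top_iff' r _).mpr ⟨u, rfl⟩),
          sub_zero]
      · rintro ⟨kq, hkq⟩
        obtain ⟨k, rfl⟩ := Submodule.Quotient.mk_surjective _ kq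
        rw [QuotSMulTop.map_apply_mk] at hkq
        rw [Submodule.Quotient.mk_eq_zero]
        obtain ⟨u, hu⟩ := (mem_smul_top_iff' _ _).mp ((Submodule.Quotient.eq _).mp hkq)
        refine (mem_smul_top_iff' _ _).mpr ⟨-f u, ?_⟩
        have h5 : f (r • u) = f (ι k) - f x := by rw [hu, map_sub]
        rw [hex.apply_apply_eq_zero, zero_sub] at h5
        rw [smul_neg, ← map_smul, h5, neg_neg]

private lemma isWeaklyRegular_map_pow (k : ℕ) (hk : 0 < k) :
    ∀ (rs : List R) (M : Type) [AddCommGroup M] [Module R M],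
      IsWeaklyRegular M rs → IsWeaklyRegular M (rs.map (· ^ k)) := by
  intro rs
  induction rs with
  | nil => intro M _ _ _; exact IsWeaklyRegular.nil ..
  | cons r rs ih =>
    intro M _ _ h
    rw [isWeaklyRegular_cons_iff] at h
    obtain ⟨h1, h2⟩ := h
    rw [List.map_cons, isWeaklyRegular_cons_iff]
    refine ⟨h1.pow k, ?_⟩
    have base : IsWeaklyRegular (QuotSMulTop r M) (rs.map (· ^ k)) := ih _ h2
    have key : ∀ j : ℕ, IsWeaklyRegular (QuotSMulTop (r ^ (j + 1)) M) (rs.map (· ^ k)) := by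
      intro j
      induction j with
      | zero => rw [pow_one]; exact base
      | succ j ihj =>
        have hle1 : r • (⊤ : Submodule R M) ≤
            Submodule.comap (LinearMap.lsmul R M (r ^ (j + 1))) (r ^ (j + 2) • ⊤) := by
          intro x hx
          obtain ⟨y, hy⟩ := (mem_smul_top_iff' r x).mp hx
          refine Submodule.mem_comap.mpr ((mem_smul_top_iff' _ _).mpr ⟨y, ?_⟩)
          rw [LinearMap.lsmul_apply, ← hy, smul_smul, ← pow_succ]
        have hle2 : r ^ (j + 2) • (⊤ : Submodule R M) ≤
            Submodule.comap (LinearMap.id (R := R)) (r ^ (j + 1) • ⊤) := by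
          intro x hx
          obtain ⟨y, hy⟩ := (mem_smul_top_iff' _ x).mp hx
          refine Submodule.mem_comap.mpr ((mem_smul_top_iff' _ _).mpr ⟨r • y, ?_⟩)
          rw [LinearMap.id_apply, smul_smul, ← pow_succ, hy]
        refine isWeaklyRegular_of_exact _
          (Submodule.mapQ _ _ (LinearMap.lsmul R M (r ^ (j + 1))) hle1)
          (Submodule.mapQ _ _ LinearMap.id hle2) ?_ ?_ ?_ base ihj
        · rw [injective_iff_map_eq_zero]
          intro aq
          obtain ⟨x, rfl⟩ := Submodule.Quotient.mk_surjective _ aq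
          intro hx
          rw [Submodule.mapQ_apply, LinearMap.lsmul_apply, Submodule.Quotient.mk_eq_zero] at hx
          obtain ⟨y, hy⟩ := (mem_smul_top_iff' _ _).mp hx
          have heq : r ^ (j + 1) • (r • y) = r ^ (j + 1) • x := by
            rw [smul_smul, ← pow_succ]; exact hy
          have := (h1.pow (j + 1)) heq
          rw [Submodule.Quotient.mk_eq_zero]
          exact (mem_smul_top_iff' r x).mpr ⟨y, this⟩
        · intro bq
          obtain ⟨z, rfl⟩ := Submodule.Quotient.mk_surjective _ bq
          exact ⟨Submodule.Quotient.mk z, by rw [Submodule.mapQ_apply, LinearMap.id_apply]⟩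
        · intro bq
          obtain ⟨x, rfl⟩ := Submodule.Quotient.mk_surjective _ bq
          rw [Submodule.mapQ_apply, LinearMap.id_apply]
          constructor
          · intro hx
            rw [Submodule.Quotient.mk_eq_zero] at hx
            obtain ⟨w, hw⟩ := (mem_smul_top_iff' _ _).mp hx
            refine ⟨Submodule.Quotient.mk w, ?_⟩
            rw [Submodule.mapQ_apply, LinearMap.lsmul_apply, hw]
          · rintro ⟨kq, hkq⟩
            obtain ⟨w, rfl⟩ := Submodule.Quotient.mk_surjective _ kq
            rw [Submodule.mapQ_apply, LinearMap.lsmul_apply] at hkq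
            rw [Submodule.Quotient.mk_eq_zero]
            obtain ⟨u, hu⟩ := (mem_smul_top_iff' _ _).mp ((Submodule.Quotient.eq _).mp hkq)
            refine (mem_smul_top_iff' _ _).mpr ⟨w - r • u, ?_⟩
            rw [smul_sub, smul_smul, ← pow_succ, hu, sub_sub_cancel]
    obtain ⟨k', rfl⟩ : ∃ k', k = k' + 1 := ⟨k - 1, (Nat.succ_pred_eq_of_pos hk).symm⟩
    exact key k'

end ModuleLemmas

section WittHelpers

variable (p : ℕ) [hp : Fact p.Prime] {A : Type} [CommRing A]

local notation "𝕎" => WittVector p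

open WittVector

private lemma iterate_verschiebung_coeff_lt (X : 𝕎 A) :
    ∀ (m i : ℕ), i < m → (verschiebung^[m] X).coeff i = 0 := by
  intro m
  induction m with
  | zero => intro i hi; exact absurd hi (Nat.not_lt_zero i)
  | succ m ih =>
    intro i hi
    rw [Function.iterate_succ_apply']
    match i with
    | 0 => exact verschiebung_coeff_zero _
    | (j + 1) =>
      rw [verschiebung_coeff_succ]
      exact ih j (Nat.lt_of_succ_lt_succ hi)

private lemma iterate_verschiebung_add (m : ℕ) (X Y : 𝕎 A) :
    verschiebung^[m] (X + Y) = verschiebung^[m] X + verschiebung^[m] Y := by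
  induction m with
  | zero => rfl
  | succ m ih =>
    rw [Function.iterate_succ_apply', Function.iterate_succ_apply',
      Function.iterate_succ_apply', ih, map_add]

private lemma iterate_verschiebung_zero (m : ℕ) :
    verschiebung^[m] (0 : 𝕎 A) = 0 := by
  induction m with
  | zero => rfl
  | succ m ih => rw [Function.iterate_succ_apply', ih, map_zero]

private lemma iterate_frobenius_verschiebung (m : ℕ) (Y : 𝕎 A) :
    frobenius^[m] (verschiebung^[m] Y) = Y * (p : 𝕎 A) ^ m := by
  induction m generalizing Y with
  | zero => simp
  | succ m ih =>
    rw [Function.iterate_succ_apply (f := verschiebung),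
      Function.iterate_succ_apply' (f := frobenius), ih (verschiebung Y)]
    rw [map_mul, frobenius_verschiebung, map_pow, map_natCast, pow_succ]
    ring

private lemma ghost_iterate_frobenius (m : ℕ) (X : 𝕎 A) :
    ghostComponent 0 (frobenius^[m] X) = ghostComponent m X := by
  induction m generalizing X with
  | zero => rfl
  | succ m ih =>
    rw [Function.iterate_succ_apply, ih, ghostComponent_frobenius]

private lemma coeff_zero_eq_ghost (x : 𝕎 A) : x.coeff 0 = ghostComponent 0 x := by
  rw [ghostComponent_apply, wittPolynomial_zero, MvPolynomial.aeval_X]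

private lemma coeff_zero_iterate_frobenius_teichmuller (m : ℕ) (b : A) :
    (frobenius^[m] (teichmuller p b)).coeff 0 = b ^ p ^ m := by
  rw [coeff_zero_eq_ghost, ghost_iterate_frobenius, ghostComponent_teichmuller]

/-- The canonical generator of the kernel of `W_{m+1} → W_m`. -/
private noncomputable def kappa (m : ℕ) (c : A) : TruncatedWittVector p (m + 1) A :=
  WittVector.truncate (m + 1) (verschiebung^[m] (teichmuller p c))

private lemma kappa_coeff_lt (m : ℕ) (c : A) (i : Fin (m + 1)) (hi : (i : ℕ) < m) :
    (kappa p m c).coeff i = 0 := by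
  rw [kappa, WittVector.coeff_truncate]
  exact iterate_verschiebung_coeff_lt p _ _ _ hi

private lemma kappa_coeff_last (m : ℕ) (c : A) :
    (kappa p m c).coeff (Fin.last m) = c := by
  rw [kappa, WittVector.coeff_truncate]
  have h := iterate_verschiebung_coeff (x := teichmuller p c) (p := p) m 0
  rw [zero_add] at h
  rw [show (((Fin.last m) : Fin (m+1)) : ℕ) = m from rfl, h, teichmuller_coeff_zero]

private lemma truncate_iterate_eq_kappa (m : ℕ) (Z : 𝕎 A) :
    WittVector.truncate (m + 1) (verschiebung^[m] Z) = kappa p m (Z.coeff 0) := by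
  apply TruncatedWittVector.ext
  intro i
  rcases Nat.lt_succ_iff_lt_or_eq.mp i.isLt with hi | hi
  · rw [WittVector.coeff_truncate, iterate_verschiebung_coeff_lt p _ _ _ hi,
      kappa_coeff_lt p m _ i hi]
  · have hil : i = Fin.last m := Fin.ext hi
    have h := iterate_verschiebung_coeff (x := Z) (p := p) m 0
    rw [zero_add] at h
    rw [hil, WittVector.coeff_truncate, kappa_coeff_last,
      show (((Fin.last m) : Fin (m+1)) : ℕ) = m from rfl, h]

private lemma kappa_zero (m : ℕ) : kappa p m (0 : A) = 0 := by
  rw [kappa, teichmuller_zero, iterate_verschiebung_zero, map_zero]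

private lemma eq_kappa_of_lower_zero {m : ℕ} {x : TruncatedWittVector p (m + 1) A}
    (h : ∀ i : Fin (m + 1), (i : ℕ) < m → x.coeff i = 0) :
    x = kappa p m (x.coeff (Fin.last m)) := by
  apply TruncatedWittVector.ext
  intro i
  rcases Nat.lt_succ_iff_lt_or_eq.mp i.isLt with hi | hi
  · rw [h i hi, kappa_coeff_lt p m _ i hi]
  · have : i = Fin.last m := Fin.ext hi
    rw [this, kappa_coeff_last]

private lemma truncate_eq_zero_iff (m : ℕ) (x : TruncatedWittVector p (m + 1) A) :
    TruncatedWittVector.truncate (Nat.le_succ m) x = 0 ↔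
      ∀ i : Fin (m + 1), (i : ℕ) < m → x.coeff i = 0 := by
  constructor
  · intro h i hi
    have := congrArg (TruncatedWittVector.coeff (⟨(i : ℕ), hi⟩ : Fin m)) h
    rw [TruncatedWittVector.coeff_truncate, TruncatedWittVector.coeff_zero] at this
    rwa [show Fin.castLE (Nat.le_succ m) ⟨(i : ℕ), hi⟩ = i from Fin.ext rfl] at this
  · intro h
    apply TruncatedWittVector.ext
    intro i
    rw [TruncatedWittVector.coeff_truncate, TruncatedWittVector.coeff_zero]
    exact h _ (by simpa using i.isLt)

private lemma kappa_add (m : ℕ) (c d : A) :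
    kappa p m c + kappa p m d = kappa p m (c + d) := by
  rw [kappa, kappa, ← map_add, ← iterate_verschiebung_add, truncate_iterate_eq_kappa,
    add_coeff_zero, teichmuller_coeff_zero, teichmuller_coeff_zero]

private lemma teichmuller_mul_kappa (m : ℕ) (b c : A) :
    WittVector.truncate (m + 1) (teichmuller p b) * kappa p m c =
      kappa p m (b ^ p ^ m * c) := by
  rw [kappa, ← map_mul]
  have key : teichmuller p b * verschiebung^[m] (teichmuller p c) =
      verschiebung^[m] (teichmuller p c * frobenius^[m] (teichmuller p b)) := by
    rw [mul_comm, iterate_verschiebung_mul_left]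
  rw [key, truncate_iterate_eq_kappa, mul_coeff_zero, teichmuller_coeff_zero,
    coeff_zero_iterate_frobenius_teichmuller, mul_comm]

private lemma kappa_mul (m : ℕ) (c d : A) :
    kappa p m c * kappa p m d = kappa p m ((p : A) ^ m * (c * d)) := by
  rw [kappa, kappa, ← map_mul, iterate_verschiebung_mul_left,
    iterate_frobenius_verschiebung, truncate_iterate_eq_kappa]
  congr 1
  rw [← mul_assoc, mul_coeff_zero, mul_coeff_zero, teichmuller_coeff_zero,
    teichmuller_coeff_zero]
  have : ((p : 𝕎 A) ^ m).coeff 0 = (p : A) ^ m := by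
    have := (WittVector.constantCoeff (p := p) (R := A)).map_pow (p : 𝕎 A) m
    rw [map_natCast] at this
    simpa [WittVector.constantCoeff] using this
  rw [this]
  ring

/-- `coeff 0` as a ring hom on truncated Witt vectors. -/
private noncomputable def cf0 (k : ℕ) : TruncatedWittVector p (k + 1) A →+* A where
  toFun x := x.coeff 0
  map_one' := by
    have h : (1 : TruncatedWittVector p (k+1) A) = WittVector.truncate (k+1) 1 :=
      (map_one _).symm
    rw [h, WittVector.coeff_truncate]
    simpa using one_coeff_zero (p := p) (R := A)
  map_mul' x y := by
    obtain ⟨X, rfl⟩ := WittVector.truncate_surjective p (k+1) A x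
    obtain ⟨Y, rfl⟩ := WittVector.truncate_surjective p (k+1) A y
    rw [← map_mul, WittVector.coeff_truncate, WittVector.coeff_truncate,
      WittVector.coeff_truncate]
    simpa using mul_coeff_zero X Y
  map_zero' := by
    have h : (0 : TruncatedWittVector p (k+1) A) = WittVector.truncate (k+1) 0 :=
      (map_zero _).symm
    rw [h, WittVector.coeff_truncate]
    simp
  map_add' x y := by
    obtain ⟨X, rfl⟩ := WittVector.truncate_surjective p (k+1) A x
    obtain ⟨Y, rfl⟩ := WittVector.truncate_surjective p (k+1) A y
    rw [← map_add, WittVector.coeff_truncate, WittVector.coeff_truncate,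
      WittVector.coeff_truncate]
    simpa using add_coeff_zero X Y

end WittHelpers
section Local

variable (p : ℕ) [hp : Fact p.Prime] {A : Type} [CommRing A]

open WittVector IsLocalRing

private lemma isUnit_of_isUnit_cf0 [IsLocalRing A]
    (hpm : (p : A) ∈ maximalIdeal A) :
    ∀ (k : ℕ) (x : TruncatedWittVector p (k + 1) A), IsUnit (cf0 p k x) → IsUnit x := by
  intro k
  induction k with
  | zero =>
    intro x hx
    obtain ⟨u, hu⟩ := hx
    have ext0 : ∀ z w : TruncatedWittVector p (0 + 1) A,
        cf0 p 0 z = cf0 p 0 w → z = w := by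
      intro z w hzw
      apply TruncatedWittVector.ext
      intro i
      have hi : i = 0 := Fin.ext (Nat.lt_one_iff.mp i.isLt)
      rw [hi]
      exact hzw
    refine IsUnit.of_mul_eq_one (a := x) (WittVector.truncate (0 + 1) (teichmuller p ((u⁻¹ : Aˣ) : A))) ?_
    apply ext0
    have h2 : cf0 p 0 (WittVector.truncate (0 + 1) (teichmuller p ((u⁻¹ : Aˣ) : A))) =
        ((u⁻¹ : Aˣ) : A) := by
      show TruncatedWittVector.coeff (0 : Fin (0 + 1))
          (WittVector.truncate (0 + 1) (teichmuller p ((u⁻¹ : Aˣ) : A))) = ((u⁻¹ : Aˣ) : A)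
      rw [WittVector.coeff_truncate]
      simpa using teichmuller_coeff_zero p ((u⁻¹ : Aˣ) : A)
    rw [map_mul, map_one, h2, ← hu, Units.mul_inv]
  | succ k ih =>
    intro x hx
    have hcf : cf0 p k (TruncatedWittVector.truncate (Nat.le_succ (k + 1)) x) =
        cf0 p (k + 1) x := by
      show TruncatedWittVector.coeff (0 : Fin (k + 1))
          (TruncatedWittVector.truncate (Nat.le_succ (k + 1)) x) =
        TruncatedWittVector.coeff (0 : Fin (k + 1 + 1)) x
      rw [TruncatedWittVector.coeff_truncate]
      exact congrArg x.coeff (Fin.ext rfl)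
    have hx'u : IsUnit (TruncatedWittVector.truncate (Nat.le_succ (k + 1)) x) :=
      ih _ (by rw [hcf]; exact hx)
    obtain ⟨u, hu⟩ := hx'u
    obtain ⟨y, hy⟩ := TruncatedWittVector.truncate_surjective (p := p) (R := A)
      (Nat.le_succ (k + 1)) ((((u⁻¹ : _ˣ)) : TruncatedWittVector p (k + 1) A))
    have hker : TruncatedWittVector.truncate (Nat.le_succ (k + 1)) (x * y - 1) = 0 := by
      rw [map_sub, map_mul, hy, ← hu, map_one, Units.mul_inv, sub_self]
    set c := (x * y - 1).coeff (Fin.last (k + 1)) with hc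
    have hxy : x * y = 1 + kappa p (k + 1) c := by
      have := eq_kappa_of_lower_zero (p := p) ((truncate_eq_zero_iff p (k + 1) _).mp hker)
      rw [← hc] at this
      rw [← this]
      ring
    -- invert 1 + kappa c
    have humax : IsUnit (1 + (p : A) ^ (k + 1) * c) := by
      by_contra hnu
      have hmem : 1 + (p : A) ^ (k + 1) * c ∈ maximalIdeal A := hnu
      have hpc : (p : A) ^ (k + 1) * c ∈ maximalIdeal A :=
        Ideal.mul_mem_right _ _ (Ideal.pow_mem_of_mem _ hpm _ (Nat.succ_pos k))
      have : (1 : A) ∈ maximalIdeal A := by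
        have := Ideal.sub_mem _ hmem hpc
        simpa using this
      exact (Ideal.ne_top_iff_one _).mp
        (Ideal.IsMaximal.ne_top (maximalIdeal.isMaximal A)) this
    obtain ⟨v, hv⟩ := humax.exists_right_inv
    have hprod : (1 + kappa p (k + 1) c) * (1 + kappa p (k + 1) (-(c * v))) = 1 := by
      have expand : (1 + kappa p (k + 1) c) * (1 + kappa p (k + 1) (-(c * v))) =
          1 + (kappa p (k + 1) c + kappa p (k + 1) (-(c * v)) +
            kappa p (k + 1) c * kappa p (k + 1) (-(c * v))) := by ring
      rw [expand, kappa_mul, kappa_add, kappa_add]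
      have hz : c + -(c * v) + (p : A) ^ (k + 1) * (c * -(c * v)) = 0 := by
        have : c + -(c * v) + (p : A) ^ (k + 1) * (c * -(c * v)) =
            c - c * ((1 + (p : A) ^ (k + 1) * c) * v) := by ring
        rw [this, hv, mul_one, sub_self]
      rw [hz, kappa_zero, add_zero]
    have : IsUnit (x * y) := by
      rw [hxy]
      exact IsUnit.of_mul_eq_one _ hprod
    exact isUnit_of_mul_isUnit_left this

private lemma isLocalRing_truncatedWittVector [IsLocalRing A]
    (hpm : (p : A) ∈ maximalIdeal A) (k : ℕ) :
    IsLocalRing (TruncatedWittVector p (k + 1) A) := by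
  haveI : Nontrivial (TruncatedWittVector p (k + 1) A) := (cf0 p k).domain_nontrivial
  apply IsLocalRing.of_isUnit_or_isUnit_one_sub_self
  intro x
  rcases IsLocalRing.isUnit_or_isUnit_one_sub_self (cf0 p k x) with h | h
  · exact Or.inl (isUnit_of_isUnit_cf0 p hpm k x h)
  · refine Or.inr (isUnit_of_isUnit_cf0 p hpm k (1 - x) ?_)
    rwa [map_sub, map_one]

end Local
section MainAux

variable (p : ℕ) [hp : Fact p.Prime] {A : Type} [CommRing A]

open WittVector RingTheory.Sequence

private lemma truncate_refl (k : ℕ) (x : TruncatedWittVector p k A) :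
    TruncatedWittVector.truncate (le_refl k) x = x := by
  apply TruncatedWittVector.ext
  intro i
  rw [TruncatedWittVector.coeff_truncate]
  exact congrArg (fun j => TruncatedWittVector.coeff j x) (Fin.ext rfl)

private lemma aux_weaklyRegular (n : ℕ) (d : ℕ) (a : Fin d → A)
    (hpow : ∀ m : ℕ, IsWeaklyRegular A (List.ofFn fun i => a i ^ p ^ m)) :
    ∀ (m : ℕ) (hm : m ≤ n + 1),
      letI : Module (TruncatedWittVector p (n + 1) A) (TruncatedWittVector p m A) :=
        Module.compHom _ (TruncatedWittVector.truncate hm)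
      IsWeaklyRegular (TruncatedWittVector p m A)
        (List.ofFn fun i => WittVector.truncate (n + 1) (teichmuller p (a i))) := by
  intro m
  induction m with
  | zero =>
    intro hm
    letI : Module (TruncatedWittVector p (n + 1) A) (TruncatedWittVector p 0 A) :=
      Module.compHom _ (TruncatedWittVector.truncate hm)
    haveI : Subsingleton (TruncatedWittVector p 0 A) :=
      ⟨fun x y => TruncatedWittVector.ext fun i => i.elim0⟩
    exact isWeaklyRegular_of_subsingleton _
  | succ m ih =>
    intro hm
    have hm' : m ≤ n + 1 := Nat.le_of_succ_le hm
    letI instM : Module (TruncatedWittVector p (n + 1) A) (TruncatedWittVector p (m + 1) A) :=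
      Module.compHom _ (TruncatedWittVector.truncate hm)
    letI instN : Module (TruncatedWittVector p (n + 1) A) (TruncatedWittVector p m A) :=
      Module.compHom _ (TruncatedWittVector.truncate hm')
    set R := TruncatedWittVector p (n + 1) A
    set t : Fin d → R := fun i => WittVector.truncate (n + 1) (teichmuller p (a i)) with ht
    -- the truncation, as an R-linear map
    set f : TruncatedWittVector p (m + 1) A →ₗ[R] TruncatedWittVector p m A :=
      { toFun := TruncatedWittVector.truncate (Nat.le_succ m)
        map_add' := fun x y => map_add _ x y
        map_smul' := fun r x => by
          show TruncatedWittVector.truncate (Nat.le_succ m)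
              (TruncatedWittVector.truncate hm r * x) =
            TruncatedWittVector.truncate hm' r *
              TruncatedWittVector.truncate (Nat.le_succ m) x
          rw [map_mul, TruncatedWittVector.truncate_truncate] } with hf
    have hmemker : ∀ x : TruncatedWittVector p (m + 1) A,
        x ∈ LinearMap.ker f ↔ TruncatedWittVector.truncate (Nat.le_succ m) x = 0 :=
      fun x => Iff.rfl
    -- the additive equivalence between the kernel and A
    set e : ↥(LinearMap.ker f) ≃+ A :=
      { toFun := fun x => (x : TruncatedWittVector p (m + 1) A).coeff (Fin.last m)
        invFun := fun c => ⟨kappa p m c, by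
          rw [hmemker]
          exact (truncate_eq_zero_iff p m _).mpr (fun i hi => kappa_coeff_lt p m c i hi)⟩
        left_inv := fun x => by
          apply Subtype.ext
          exact (eq_kappa_of_lower_zero (p := p)
            ((truncate_eq_zero_iff p m _).mp ((hmemker _).mp x.2))).symm
        right_inv := fun c => kappa_coeff_last p m c
        map_add' := fun x y => by
          have hx := eq_kappa_of_lower_zero (p := p)
            ((truncate_eq_zero_iff p m _).mp ((hmemker _).mp x.2))
          have hy := eq_kappa_of_lower_zero (p := p)
            ((truncate_eq_zero_iff p m _).mp ((hmemker _).mp y.2))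
          show ((x : TruncatedWittVector p (m + 1) A) +
              (y : TruncatedWittVector p (m + 1) A)).coeff (Fin.last m) = _
          conv_lhs => rw [hx, hy]
          rw [kappa_add, kappa_coeff_last] } with he
    have main : ∀ (j : Fin d) (x : ↥(LinearMap.ker f)),
        e (t j • x) = (a j ^ p ^ m) • e x := by
      intro j x
      have hx := eq_kappa_of_lower_zero (p := p)
        ((truncate_eq_zero_iff p m _).mp ((hmemker _).mp x.2))
      show (TruncatedWittVector.truncate hm (t j) *
          (x : TruncatedWittVector p (m + 1) A)).coeff (Fin.last m) =
        a j ^ p ^ m • (x : TruncatedWittVector p (m + 1) A).coeff (Fin.last m)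
      rw [ht]
      rw [TruncatedWittVector.truncate_wittVector_truncate]
      conv_lhs => rw [hx]
      rw [teichmuller_mul_kappa, kappa_coeff_last, smul_eq_mul]
    have hrel : List.Forall₂
        (fun (r : R) (s : A) => ∀ x : ↥(LinearMap.ker f), e (r • x) = s • e x)
        (List.ofFn t) (List.ofFn fun i => a i ^ p ^ m) := by
      rw [List.forall₂_iff_get]
      refine ⟨by simp, ?_⟩
      intro i h1 h2
      rw [List.get_ofFn, List.get_ofFn]
      exact main _
    have hK : IsWeaklyRegular ↥(LinearMap.ker f) (List.ofFn t) :=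
      (e.isWeaklyRegular_congr hrel).mpr (hpow m)
    exact isWeaklyRegular_of_exact (List.ofFn t) (LinearMap.ker f).subtype f
      (Submodule.injective_subtype _) (TruncatedWittVector.truncate_surjective (Nat.le_succ m))
      (LinearMap.exact_subtype_ker_map f) hK (ih hm')

end MainAux

/-- Let `A` be a noetherian local ring with `p` in its maximal ideal, and let
`a_1, …, a_d` be a regular sequence for `A` contained in the maximal ideal. Then the
Teichmüller lifts `[a_1], …, [a_d]` lie in the maximal ideal of the local ring `W_n(A)`
(equivalently, are nonunits) and form a regular sequence for `W_n(A)`.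
(Normalized indexing: `W_n = TruncatedWittVector p (n+1)`.) -/
theorem teichmuller_lift_of_regular_sequence (p : ℕ) [Fact p.Prime] (n : ℕ)
    (A : Type) [CommRing A] [IsLocalRing A] [IsNoetherianRing A]
    (hp : (p : A) ∈ IsLocalRing.maximalIdeal A)
    (d : ℕ) (a : Fin d → A)
    (ha : ∀ i, a i ∈ IsLocalRing.maximalIdeal A)
    (hreg : RingTheory.Sequence.IsRegular A (List.ofFn a)) :
    (∀ i, WittVector.truncate (n + 1) (WittVector.teichmuller p (a i)) ∈
        nonunits (TruncatedWittVector p (n + 1) A)) ∧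
    RingTheory.Sequence.IsRegular (TruncatedWittVector p (n + 1) A)
      (List.ofFn fun i => WittVector.truncate (n + 1) (WittVector.teichmuller p (a i))) := by
  haveI hLocal : IsLocalRing (TruncatedWittVector p (n + 1) A) :=
    isLocalRing_truncatedWittVector p hp n
  have hnon : ∀ i, WittVector.truncate (n + 1) (WittVector.teichmuller p (a i)) ∈
      nonunits (TruncatedWittVector p (n + 1) A) := by
    intro i
    rw [mem_nonunits_iff]
    intro hu
    have hmap := hu.map (cf0 p n)
    have hval : cf0 p n (WittVector.truncate (n + 1) (WittVector.teichmuller p (a i))) = a i := by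
      show TruncatedWittVector.coeff (0 : Fin (n + 1))
          (WittVector.truncate (n + 1) (WittVector.teichmuller p (a i))) = a i
      rw [WittVector.coeff_truncate]
      simpa using WittVector.teichmuller_coeff_zero p (a i)
    rw [hval] at hmap
    exact (IsLocalRing.mem_maximalIdeal _).mp (ha i) hmap
  refine ⟨hnon, ?_⟩
  rw [RingTheory.Sequence.isRegular_iff]
  set R := TruncatedWittVector p (n + 1) A
  set rs := List.ofFn fun i => WittVector.truncate (n + 1) (WittVector.teichmuller p (a i))
    with hrs
  have hpow : ∀ m : ℕ, RingTheory.Sequence.IsWeaklyRegular A (List.ofFn fun i => a i ^ p ^ m) := by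
    intro m
    have h := isWeaklyRegular_map_pow (p ^ m) (pow_pos (Fact.out : p.Prime).pos m)
      (List.ofFn a) A hreg.toIsWeaklyRegular
    rwa [List.map_ofFn] at h
  constructor
  · -- weakly regular
    have htop := aux_weaklyRegular p n d a hpow (n + 1) (le_refl (n + 1))
    refine (@AddEquiv.isWeaklyRegular_congr R R R R _ _ _ _
      (Module.compHom R (TruncatedWittVector.truncate (le_refl (n + 1)))) _
      (AddEquiv.refl R) rs rs ?_).mp htop
    apply List.forall₂_same.mpr
    intro r _ x
    show TruncatedWittVector.truncate (le_refl (n + 1)) r * x = r * x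
    rw [truncate_refl]
  · -- the span is proper
    intro htopeq
    have hle : Ideal.ofList rs • (⊤ : Submodule R R) ≤
        (IsLocalRing.maximalIdeal R : Submodule R R) := by
      refine Submodule.smul_le.mpr ?_
      intro r hr x _
      have hrm : r ∈ IsLocalRing.maximalIdeal R := by
        refine Ideal.span_le.mpr ?_ hr
        intro s hs
        obtain ⟨i, rfl⟩ := List.mem_ofFn.mp hs
        exact (IsLocalRing.mem_maximalIdeal _).mpr (hnon i)
      exact Ideal.mul_mem_right _ _ hrm
    have h1 : (1 : R) ∈ IsLocalRing.maximalIdeal R := hle (htopeq ▸ Submodule.mem_top)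
    exact (Ideal.ne_top_iff_one _).mp
      (Ideal.IsMaximal.ne_top (IsLocalRing.maximalIdeal.isMaximal R)) h1
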